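/- For α ∈ (0,1), a probability measure π, and L ∈ L¹(π), the Expected Shortfall ES_{α,π}(L) := (1-α)^{-1} ∫_α^1 F_{L,π}^←(u) du equals min_{b ∈ ℝ} ( b + (1-α)^{-1} E_π[(L-b)_+] ), and the minimum is attained at b = F_{L,π}^←(α). -/

import Mathlib

open MeasureTheory Filter Set ProbabilityTheory

lemma aux_quantile_le_iff (μ : Measure ℝ) [IsProbabilityMeasure μ] {u x : ℝ}
    (hu0 : 0 < u) (hu1 : u < 1) :
    sInf {y : ℝ | u ≤ cdf μ y} ≤ x ↔ u ≤ cdf μ x := by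
  obtain ⟨z, hz⟩ : ∃ z, u ≤ cdf μ z :=
    ((tendsto_cdf_atTop μ).eventually (eventually_ge_nhds hu1)).exists
  obtain ⟨y0, hy0⟩ : ∃ y0, cdf μ y0 < u :=
    ((tendsto_cdf_atBot μ).eventually (eventually_lt_nhds hu0)).exists
  have hbdd : BddBelow {y : ℝ | u ≤ cdf μ y} := by
    refine ⟨y0, fun y hy => le_of_not_gt fun hlt => ?_⟩
    exact absurd hy (not_le.mpr ((monotone_cdf μ hlt.le).trans_lt hy0))
  constructor
  · intro h
    have hall : ∀ y, x < y → u ≤ cdf μ y := by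
      intro y hy
      have hne : Set.Nonempty {y : ℝ | u ≤ cdf μ y} := ⟨z, hz⟩
      obtain ⟨w, hwS, hwlt⟩ := exists_lt_of_csInf_lt hne (h.trans_lt hy)
      exact hwS.trans (monotone_cdf μ hwlt.le)
    have htd : Filter.Tendsto (cdf μ) (nhdsWithin x (Ioi x)) (nhds (cdf μ x)) :=
      ((cdf μ).right_continuous x).mono_left (nhdsWithin_mono x Ioi_subset_Ici_self)
    exact ge_of_tendsto htd (eventually_nhdsWithin_of_forall hall)
  · intro h
    exact csInf_le hbdd h

lemma aux_mono (μ : Measure ℝ) [IsProbabilityMeasure μ] :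
    MonotoneOn (fun u => sInf {y : ℝ | u ≤ cdf μ y}) (Ioo (0:ℝ) 1) := by
  intro u hu v hv huv
  exact (aux_quantile_le_iff μ hu.1 hu.2).mpr
    (huv.trans ((aux_quantile_le_iff μ hv.1 hv.2).mp le_rfl))

lemma aux_map (μ : Measure ℝ) [IsProbabilityMeasure μ] :
    (volume.restrict (Ioo (0:ℝ) 1)).map (fun u => sInf {y : ℝ | u ≤ cdf μ y}) = μ := by
  set F : ℝ → ℝ := fun u => sInf {y : ℝ | u ≤ cdf μ y} with hFdef
  have haem : AEMeasurable F (volume.restrict (Ioo (0:ℝ) 1)) :=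
    aemeasurable_restrict_of_monotoneOn measurableSet_Ioo (aux_mono μ)
  haveI : IsProbabilityMeasure (volume.restrict (Ioo (0:ℝ) 1)) :=
    ⟨by simp [Real.volume_Ioo]⟩
  haveI : IsProbabilityMeasure ((volume.restrict (Ioo (0:ℝ) 1)).map F) :=
    Measure.isProbabilityMeasure_map haem
  refine MeasureTheory.Measure.ext_of_Iic _ _ (fun x => ?_)
  rw [Measure.map_apply_of_aemeasurable haem measurableSet_Iic,
    Measure.restrict_apply' measurableSet_Ioo]
  have hset : F ⁻¹' Iic x ∩ Ioo 0 1 = Iic (cdf μ x) ∩ Ioo 0 1 := by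
    ext u
    simp only [mem_inter_iff, mem_preimage, mem_Iic, mem_Ioo, and_congr_left_iff]
    intro hu
    exact aux_quantile_le_iff μ hu.1 hu.2
  rw [hset, ← ofReal_cdf μ x]
  have h0 : (0:ℝ) ≤ cdf μ x := cdf_nonneg μ x
  have h1 : cdf μ x ≤ 1 := cdf_le_one μ x
  rcases eq_or_lt_of_le h1 with h1e | h1l
  · have : Iic (cdf μ x) ∩ Ioo (0:ℝ) 1 = Ioo 0 1 := by
      rw [inter_eq_right]
      exact fun y hy => le_of_lt (h1e ▸ hy.2)
    rw [this]
    simp [Real.volume_Ioo, h1e]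
  · have : Iic (cdf μ x) ∩ Ioo (0:ℝ) 1 = Ioc 0 (cdf μ x) := by
      ext y
      simp only [mem_inter_iff, mem_Iic, mem_Ioo, mem_Ioc]
      exact ⟨fun h => ⟨h.2.1, h.1⟩, fun h => ⟨h.2, h.1, h.2.trans_lt h1l⟩⟩
    rw [this, Real.volume_Ioc, sub_zero]

set_option maxHeartbeats 1600000 in
theorem stmt_1 {Ω : Type*} [MeasurableSpace Ω] (π : Measure Ω) [IsProbabilityMeasure π]
    (L : Ω → ℝ) (hLmeas : Measurable L) (hL : Integrable L π)
    (α : ℝ) (hα : α ∈ Set.Ioo (0:ℝ) 1)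
    (F : ℝ → ℝ) (hF : ∀ u, F u = sInf {x : ℝ | u ≤ (π {ω | L ω ≤ x}).toReal})
    (g : ℝ → ℝ) (hg : ∀ b, g b = b + (1 - α)⁻¹ * ∫ ω, max (L ω - b) 0 ∂π) :
    IsLeast (Set.range g) ((1 - α)⁻¹ * ∫ u in α..1, F u) ∧
    g (F α) = (1 - α)⁻¹ * ∫ u in α..1, F u := by
  obtain ⟨hα0, hα1⟩ := hα
  have h1α : (0:ℝ) < 1 - α := by linarith
  set μ : Measure ℝ := π.map L with hμdef
  haveI : IsProbabilityMeasure μ := Measure.isProbabilityMeasure_map hLmeas.aemeasurable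
  have hFq : F = fun u => sInf {y : ℝ | u ≤ cdf μ y} := by
    funext u
    rw [hF u]
    congr 1
    ext x
    simp only [mem_setOf_eq]
    rw [cdf_eq_real, measureReal_def, hμdef, Measure.map_apply hLmeas measurableSet_Iic]
    rfl
  have hmap : (volume.restrict (Ioo (0:ℝ) 1)).map F = μ := by rw [hFq]; exact aux_map μ
  have hmono : MonotoneOn F (Ioo (0:ℝ) 1) := hFq ▸ aux_mono μ
  have haem : AEMeasurable F (volume.restrict (Ioo (0:ℝ) 1)) :=
    aemeasurable_restrict_of_monotoneOn measurableSet_Ioo hmono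
  have htrans : ∀ f : ℝ → ℝ, Measurable f →
      ∫ ω, f (L ω) ∂π = ∫ u in Ioo (0:ℝ) 1, f (F u) := by
    intro f hf
    rw [← integral_map hLmeas.aemeasurable hf.aestronglyMeasurable, ← hμdef, ← hmap,
      integral_map haem hf.aestronglyMeasurable]
  have hint : ∀ f : ℝ → ℝ, Measurable f → Integrable (fun ω => f (L ω)) π →
      IntegrableOn (fun u => f (F u)) (Ioo (0:ℝ) 1) := by
    intro f hf hfi
    have h1 : Integrable f μ :=
      (integrable_map_measure hf.aestronglyMeasurable hLmeas.aemeasurable).mpr hfi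
    rw [← hmap] at h1
    exact (integrable_map_measure hf.aestronglyMeasurable haem).mp h1
  have hsub2 : Ioo α 1 ⊆ Ioo (0:ℝ) 1 := Ioo_subset_Ioo hα0.le le_rfl
  have hsub1 : Ioc (0:ℝ) α ⊆ Ioo (0:ℝ) 1 := fun u hu => ⟨hu.1, lt_of_le_of_lt hu.2 hα1⟩
  have hFon : IntegrableOn F (Ioo (0:ℝ) 1) := by
    have := hint id measurable_id (by simpa using hL)
    simpa using this
  have hmb : ∀ b : ℝ, Measurable (fun x : ℝ => max (x - b) 0) :=
    fun b => (measurable_id.sub measurable_const).max measurable_const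
  have hkey : ∀ b : ℝ, ∫ ω, max (L ω - b) 0 ∂π = ∫ u in Ioo (0:ℝ) 1, max (F u - b) 0 :=
    fun b => htrans (fun x => max (x - b) 0) (hmb b)
  have hIb : ∀ b : ℝ, IntegrableOn (fun u => max (F u - b) 0) (Ioo (0:ℝ) 1) :=
    fun b => hint _ (hmb b) ((hL.sub (integrable_const b)).pos_part)
  have hvol : (volume (Ioo α 1)).toReal = 1 - α := by
    rw [Real.volume_Ioo]; exact ENNReal.toReal_ofReal (by linarith)
  have hFα1 : IntegrableOn F (Ioo α 1) := hFon.mono_set hsub2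
  have hIcc : ∫ u in α..1, F u = ∫ u in Ioo α 1, F u := by
    rw [intervalIntegral.integral_of_le hα1.le, MeasureTheory.integral_Ioc_eq_integral_Ioo]
  have hsubint : ∀ c : ℝ, ∫ u in Ioo α 1, (F u - c)
      = (∫ u in Ioo α 1, F u) - (1 - α) * c := by
    intro c
    rw [integral_sub hFα1 (integrableOn_const measure_Ioo_lt_top.ne enorm_ne_top),
      setIntegral_const, measureReal_def, hvol, smul_eq_mul]
  set q := F α with hq
  set I := ∫ u in Ioo α 1, F u with hI
  have hunion : Ioc (0:ℝ) α ∪ Ioo α 1 = Ioo 0 1 := by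
    ext u
    simp only [mem_union, mem_Ioc, mem_Ioo]
    constructor
    · rintro (⟨h1, h2⟩ | ⟨h1, h2⟩)
      · exact ⟨h1, lt_of_le_of_lt h2 hα1⟩
      · exact ⟨hα0.trans h1, h2⟩
    · rintro ⟨h1, h2⟩
      rcases le_or_gt u α with h | h
      · exact Or.inl ⟨h1, h⟩
      · exact Or.inr ⟨h, h2⟩
  have hdisj : Disjoint (Ioc (0:ℝ) α) (Ioo α 1) := by
    rw [Set.disjoint_left]
    rintro u ⟨_, h2⟩ ⟨h3, _⟩
    exact absurd h2 (not_le.mpr h3)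
  have hsplit : ∀ b : ℝ, ∫ u in Ioo (0:ℝ) 1, max (F u - b) 0
      = (∫ u in Ioc 0 α, max (F u - b) 0) + ∫ u in Ioo α 1, max (F u - b) 0 := by
    intro b
    rw [← hunion]
    exact setIntegral_union hdisj measurableSet_Ioo ((hIb b).mono_set hsub1)
      ((hIb b).mono_set hsub2)
  have hzero : ∫ u in Ioc (0:ℝ) α, max (F u - q) 0 = 0 := by
    rw [setIntegral_congr_fun measurableSet_Ioc (g := fun _ => (0:ℝ))
      (fun u hu => max_eq_right (sub_nonpos.mpr (hmono (hsub1 hu) ⟨hα0, hα1⟩ hu.2)))]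
    simp
  have hpos : ∫ u in Ioo α 1, max (F u - q) 0 = ∫ u in Ioo α 1, (F u - q) :=
    setIntegral_congr_fun measurableSet_Ioo
      (fun u hu => max_eq_left (sub_nonneg.mpr (hmono ⟨hα0, hα1⟩ (hsub2 hu) hu.1.le)))
  have heq : g q = (1 - α)⁻¹ * ∫ u in α..1, F u := by
    rw [hg q, hkey q, hsplit q, hzero, hpos, hsubint q, hIcc]
    field_simp
    ring
  have hlow : ∀ b, (1 - α)⁻¹ * ∫ u in α..1, F u ≤ g b := by
    intro b
    have h1 : ∫ u in Ioo α 1, max (F u - b) 0 ≤ ∫ u in Ioo (0:ℝ) 1, max (F u - b) 0 :=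
      setIntegral_mono_set (hIb b)
        (Filter.Eventually.of_forall fun u => le_max_right _ _)
        (HasSubset.Subset.eventuallyLE hsub2)
    have h2 : ∫ u in Ioo α 1, (F u - b) ≤ ∫ u in Ioo α 1, max (F u - b) 0 :=
      setIntegral_mono_on (hFα1.sub (integrableOn_const measure_Ioo_lt_top.ne enorm_ne_top))
        ((hIb b).mono_set hsub2) measurableSet_Ioo (fun u _ => le_max_left _ _)
    have h3 := hsubint b
    set M := ∫ u in Ioo (0:ℝ) 1, max (F u - b) 0 with hM
    have hkey2 : I - (1 - α) * b ≤ M := by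
      rw [← h3]; exact le_trans h2 h1
    have hinv : (0:ℝ) < (1 - α)⁻¹ := inv_pos.mpr h1α
    rw [hg b, hkey b, hIcc]
    calc (1 - α)⁻¹ * I ≤ (1 - α)⁻¹ * (M + (1 - α) * b) := by
          apply mul_le_mul_of_nonneg_left (by linarith) hinv.le
      _ = b + (1 - α)⁻¹ * M := by field_simp; ring
  exact ⟨⟨⟨F α, heq⟩, by rintro _ ⟨b, rfl⟩; exact hlow b⟩, heq⟩
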